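/- For every modal formula A, the sequent □(□(A → □A) → A) ⇒ A is provable in Grz_∞. -/
import Mathlib


/-- Modal formulas built from ⊥ and propositional variables using → and □. -/
inductive Fml : Type
  | bot : Fml
  | var : ℕ → Fml
  | imp : Fml → Fml → Fml
  | box : Fml → Fml
deriving DecidableEq

/-- A sequent `Γ ⇒ Δ`: a pair of finite multisets of formulas. -/
abbrev Sequent : Type := Multiset Fml × Multiset Fml

/-- Tags for the inference rules of `Grz_∞ (+ cut)`. -/
inductive RuleTag : Type
  | ax | axBot | impL | impR | refl | box | cut
deriving DecidableEq

/-- Local correctness of a rule application in `Grz_∞` (cut allowed when the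
Boolean parameter is `true`): it relates the conclusion sequent, the rule tag
and the (optional) first and second premises.  For the rule `(□)`, the second
premise is its right premise. -/
inductive Rules : Bool → Sequent → RuleTag → Option Sequent → Option Sequent → Prop
  | ax (c : Bool) (Γ Δ : Multiset Fml) (p : ℕ) :
      Rules c (Fml.var p ::ₘ Γ, Fml.var p ::ₘ Δ) RuleTag.ax none none
  | axBot (c : Bool) (Γ Δ : Multiset Fml) :
      Rules c (Fml.bot ::ₘ Γ, Δ) RuleTag.axBot none none
  | impL (c : Bool) (Γ Δ : Multiset Fml) (A B : Fml) :
      Rules c (Fml.imp A B ::ₘ Γ, Δ) RuleTag.impL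
        (some (B ::ₘ Γ, Δ)) (some (Γ, A ::ₘ Δ))
  | impR (c : Bool) (Γ Δ : Multiset Fml) (A B : Fml) :
      Rules c (Γ, Fml.imp A B ::ₘ Δ) RuleTag.impR
        (some (A ::ₘ Γ, B ::ₘ Δ)) none
  | refl (c : Bool) (Γ Δ : Multiset Fml) (B : Fml) :
      Rules c (Fml.box B ::ₘ Γ, Δ) RuleTag.refl
        (some (B ::ₘ Fml.box B ::ₘ Γ, Δ)) none
  | box (c : Bool) (Γ Φ Δ : Multiset Fml) (A : Fml) :
      Rules c (Γ + Φ.map Fml.box, Fml.box A ::ₘ Δ) RuleTag.box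
        (some (Γ + Φ.map Fml.box, A ::ₘ Δ)) (some (Φ.map Fml.box, ({A} : Multiset Fml)))
  | cut (Γ Δ : Multiset Fml) (A : Fml) :
      Rules true (Γ, Δ) RuleTag.cut (some (Γ, A ::ₘ Δ)) (some (A ::ₘ Γ, Δ))

/-- An ∞-proof in `Grz_∞` (`c = false`) or `Grz_∞ + cut` (`c = true`): a
possibly infinite tree (nodes are adressed by lists of Booleans, `false`
pointing to the first premise and `true` to the second premise) of sequents
together with applied rules, constructed according to the rules, whose leaves
are initial sequents, and in which every infinite branch passes through a
right premise of the rule `(□)` infinitely many times. -/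
structure InfProof (c : Bool) : Type where
  node : List Bool → Option (Sequent × RuleTag)
  root_isSome : (node []).isSome
  closed : ∀ (p : List Bool) (i : Bool), node p = none → node (p ++ [i]) = none
  correct : ∀ (p : List Bool) (s : Sequent) (r : RuleTag), node p = some (s, r) →
    Rules c s r ((node (p ++ [false])).map Prod.fst) ((node (p ++ [true])).map Prod.fst)
  guard : ∀ f : ℕ → Bool, (∀ n : ℕ, (node ((List.range n).map f)).isSome) →
    ∀ N : ℕ, ∃ n : ℕ, N ≤ n ∧ f n = true ∧
      (node ((List.range n).map f)).map Prod.snd = some RuleTag.box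

/-- The sequent at the root of an ∞-proof. -/
def rootSeq {c : Bool} (π : InfProof c) : Sequent :=
  ((π.node []).getD (((0 : Multiset Fml), (0 : Multiset Fml)), RuleTag.ax)).1

/-- A sequent is provable in `Grz_∞ (+ cut)` if it has an ∞-proof with that
sequent at the root. -/
def ProvableInf (c : Bool) (s : Sequent) : Prop := ∃ π : InfProof c, rootSeq π = s

/-- The number of right premises of the rule `(□)` strictly below the node
addressed by `p` in the ∞-proof `π`. -/
def countBR {c : Bool} (π : InfProof c) (p : List Bool) : ℕ :=
  ((List.range p.length).filter fun i =>
    p.getD i false && decide ((π.node (p.take i)).map Prod.snd = some RuleTag.box)).length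

/-- `Frag n π τ` means that the `n`-fragments of `π` and `τ` coincide
(`π ∼_n τ`): the trees agree on every node lying strictly before the `n`-th
right premise of `(□)` on its branch. -/
def Frag {c : Bool} (n : ℕ) (π τ : InfProof c) : Prop :=
  ∀ p : List Bool, countBR π p < n → π.node p = τ.node p

/-- The local pheight `|π|`: the length of the longest branch in the main
(1-)fragment of `π`. -/
noncomputable def pheight {c : Bool} (π : InfProof c) : ℕ :=
  sSup { n : ℕ | ∃ p : List Bool, p.length = n ∧ (π.node p).isSome ∧ countBR π p = 0 }

/-- Membership in `P_n`: the ∞-proof contains no applications of the cut rule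
in its `n`-fragment. -/
def CutFreeIn {c : Bool} (n : ℕ) (π : InfProof c) : Prop :=
  ∀ p : List Bool, countBR π p < n → (π.node p).map Prod.snd ≠ some RuleTag.cut

/-- A non-expansive mapping on ∞-proofs. -/
def NonExp {c : Bool} (u : InfProof c → InfProof c) : Prop :=
  ∀ (n : ℕ) (π π' : InfProof c), Frag n π π' → Frag n (u π) (u π')

/-- An adequate mapping on ∞-proofs: it preserves each `P_n`. -/
def Adequate {c : Bool} (u : InfProof c → InfProof c) : Prop :=
  ∀ (n : ℕ) (π : InfProof c), CutFreeIn n π → CutFreeIn n (u π)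

namespace GrzAux

/-- `A → □A` -/
def GI (A : Fml) : Fml := Fml.imp A (Fml.box A)
/-- `□(A → □A)` -/
def GG (A : Fml) : Fml := Fml.box (GI A)
/-- `□(A → □A) → A` -/
def BB (A : Fml) : Fml := Fml.imp (GG A) A
/-- `□(□(A → □A) → A)` -/
def FF (A : Fml) : Fml := Fml.box (BB A)

/-- Node function for a finite proof of the identity sequent `A, Γ ⇒ A, Δ`. -/
def idNode : Fml → Multiset Fml → Multiset Fml → List Bool → Option (Sequent × RuleTag)
  | Fml.bot, Γ, Δ, [] => some ((Fml.bot ::ₘ Γ, Fml.bot ::ₘ Δ), RuleTag.axBot)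
  | Fml.var n, Γ, Δ, [] => some ((Fml.var n ::ₘ Γ, Fml.var n ::ₘ Δ), RuleTag.ax)
  | Fml.imp B C, Γ, Δ, [] =>
      some ((Fml.imp B C ::ₘ Γ, Fml.imp B C ::ₘ Δ), RuleTag.impR)
  | Fml.imp B C, Γ, Δ, [false] =>
      some ((B ::ₘ Fml.imp B C ::ₘ Γ, C ::ₘ Δ), RuleTag.impL)
  | Fml.imp B C, Γ, Δ, false :: false :: q => idNode C (B ::ₘ Γ) Δ q
  | Fml.imp B C, Γ, Δ, false :: true :: q => idNode B Γ (C ::ₘ Δ) q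
  | Fml.box B, Γ, Δ, [] =>
      some ((Fml.box B ::ₘ Γ, Fml.box B ::ₘ Δ), RuleTag.box)
  | Fml.box B, Γ, Δ, [false] =>
      some ((Fml.box B ::ₘ Γ, B ::ₘ Δ), RuleTag.refl)
  | Fml.box B, Γ, Δ, false :: false :: q => idNode B (Fml.box B ::ₘ Γ) Δ q
  | Fml.box B, _, _, [true] =>
      some ((Fml.box B ::ₘ 0, B ::ₘ 0), RuleTag.refl)
  | Fml.box B, _, _, true :: false :: q => idNode B (Fml.box B ::ₘ 0) 0 q
  | _, _, _, _ => none

theorem id_nil (A : Fml) (Γ Δ : Multiset Fml) :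
    (idNode A Γ Δ []).map Prod.fst = some (A ::ₘ Γ, A ::ₘ Δ) := by
  cases A <;> rfl

/-- Main node function: root `□(□(A→□A)→A) ⇒ A`. -/
def mainNode (A : Fml) : List Bool → Option (Sequent × RuleTag)
  | [] => some ((FF A ::ₘ 0, A ::ₘ 0), RuleTag.refl)
  | [false] => some ((BB A ::ₘ FF A ::ₘ 0, A ::ₘ 0), RuleTag.impL)
  | false :: false :: q => idNode A (FF A ::ₘ 0) 0 q
  | [false, true] => some ((FF A ::ₘ 0, GG A ::ₘ A ::ₘ 0), RuleTag.box)
  | [false, true, false] => some ((FF A ::ₘ 0, GI A ::ₘ A ::ₘ 0), RuleTag.impR)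
  | [false, true, false, false] =>
      some ((A ::ₘ FF A ::ₘ 0, Fml.box A ::ₘ A ::ₘ 0), RuleTag.box)
  | false :: true :: false :: false :: false :: q => idNode A (FF A ::ₘ 0) (A ::ₘ 0) q
  | false :: true :: false :: false :: true :: q => mainNode A q
  | [false, true, true] => some ((FF A ::ₘ 0, GI A ::ₘ 0), RuleTag.impR)
  | [false, true, true, false] =>
      some ((A ::ₘ FF A ::ₘ 0, Fml.box A ::ₘ 0), RuleTag.box)
  | false :: true :: true :: false :: false :: q => idNode A (FF A ::ₘ 0) 0 q
  | false :: true :: true :: false :: true :: q => mainNode A q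
  | _ => none

theorem id_closed : ∀ (A : Fml) (Γ Δ : Multiset Fml) (p : List Bool) (i : Bool),
    idNode A Γ Δ p = none → idNode A Γ Δ (p ++ [i]) = none
  | Fml.bot, Γ, Δ, [], i, h => by simp [idNode] at h
  | Fml.bot, Γ, Δ, b :: q, i, h => by cases b <;> rfl
  | Fml.var n, Γ, Δ, [], i, h => by simp [idNode] at h
  | Fml.var n, Γ, Δ, b :: q, i, h => by cases b <;> rfl
  | Fml.imp B C, Γ, Δ, [], i, h => by simp [idNode] at h
  | Fml.imp B C, Γ, Δ, [false], i, h => by simp [idNode] at h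
  | Fml.imp B C, Γ, Δ, false :: false :: q, i, h =>
      id_closed C (B ::ₘ Γ) Δ q i h
  | Fml.imp B C, Γ, Δ, false :: true :: q, i, h =>
      id_closed B Γ (C ::ₘ Δ) q i h
  | Fml.imp B C, Γ, Δ, true :: q, i, h => rfl
  | Fml.box B, Γ, Δ, [], i, h => by simp [idNode] at h
  | Fml.box B, Γ, Δ, [false], i, h => by simp [idNode] at h
  | Fml.box B, Γ, Δ, false :: false :: q, i, h =>
      id_closed B (Fml.box B ::ₘ Γ) Δ q i h
  | Fml.box B, Γ, Δ, false :: true :: q, i, h => rfl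
  | Fml.box B, Γ, Δ, [true], i, h => by simp [idNode] at h
  | Fml.box B, Γ, Δ, true :: false :: q, i, h =>
      id_closed B (Fml.box B ::ₘ 0) 0 q i h
  | Fml.box B, Γ, Δ, true :: true :: q, i, h => rfl

theorem id_correct : ∀ (A : Fml) (Γ Δ : Multiset Fml) (p : List Bool) (s : Sequent) (r : RuleTag),
    idNode A Γ Δ p = some (s, r) →
    Rules false s r ((idNode A Γ Δ (p ++ [false])).map Prod.fst)
      ((idNode A Γ Δ (p ++ [true])).map Prod.fst)
  | Fml.bot, Γ, Δ, [], s, r, h => by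
      simp only [idNode, Option.some.injEq, Prod.mk.injEq] at h
      obtain ⟨rfl, rfl⟩ := h
      exact Rules.axBot false Γ (Fml.bot ::ₘ Δ)
  | Fml.bot, Γ, Δ, b :: q, s, r, h => by cases b <;> simp [idNode] at h
  | Fml.var n, Γ, Δ, [], s, r, h => by
      simp only [idNode, Option.some.injEq, Prod.mk.injEq] at h
      obtain ⟨rfl, rfl⟩ := h
      exact Rules.ax false Γ Δ n
  | Fml.var n, Γ, Δ, b :: q, s, r, h => by cases b <;> simp [idNode] at h
  | Fml.imp B C, Γ, Δ, [], s, r, h => by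
      simp only [idNode, Option.some.injEq, Prod.mk.injEq] at h
      obtain ⟨rfl, rfl⟩ := h
      exact Rules.impR false (Fml.imp B C ::ₘ Γ) Δ B C
  | Fml.imp B C, Γ, Δ, [false], s, r, h => by
      simp only [idNode, Option.some.injEq, Prod.mk.injEq] at h
      obtain ⟨rfl, rfl⟩ := h
      show Rules false _ _ ((idNode C (B ::ₘ Γ) Δ []).map Prod.fst)
        ((idNode B Γ (C ::ₘ Δ) []).map Prod.fst)
      rw [id_nil, id_nil]
      have := Rules.impL false (B ::ₘ Γ) (C ::ₘ Δ) B C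
      rwa [Multiset.cons_swap] at this
  | Fml.imp B C, Γ, Δ, false :: false :: q, s, r, h =>
      id_correct C (B ::ₘ Γ) Δ q s r h
  | Fml.imp B C, Γ, Δ, false :: true :: q, s, r, h =>
      id_correct B Γ (C ::ₘ Δ) q s r h
  | Fml.imp B C, Γ, Δ, true :: q, s, r, h => by simp [idNode] at h
  | Fml.box B, Γ, Δ, [], s, r, h => by
      simp only [idNode, Option.some.injEq, Prod.mk.injEq] at h
      obtain ⟨rfl, rfl⟩ := h
      show Rules false _ _ (some (Fml.box B ::ₘ Γ, B ::ₘ Δ))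
        (some (Fml.box B ::ₘ 0, B ::ₘ 0))
      have := Rules.box false Γ (B ::ₘ 0) Δ B
      simpa [show Γ + ({Fml.box B} : Multiset Fml) = Fml.box B ::ₘ Γ from by
        rw [add_comm, Multiset.singleton_add]] using this
  | Fml.box B, Γ, Δ, [false], s, r, h => by
      simp only [idNode, Option.some.injEq, Prod.mk.injEq] at h
      obtain ⟨rfl, rfl⟩ := h
      show Rules false _ _ ((idNode B (Fml.box B ::ₘ Γ) Δ []).map Prod.fst) none
      rw [id_nil]
      exact Rules.refl false Γ (B ::ₘ Δ) B
  | Fml.box B, Γ, Δ, false :: false :: q, s, r, h =>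
      id_correct B (Fml.box B ::ₘ Γ) Δ q s r h
  | Fml.box B, Γ, Δ, false :: true :: q, s, r, h => by simp [idNode] at h
  | Fml.box B, Γ, Δ, [true], s, r, h => by
      simp only [idNode, Option.some.injEq, Prod.mk.injEq] at h
      obtain ⟨rfl, rfl⟩ := h
      show Rules false _ _ ((idNode B (Fml.box B ::ₘ 0) 0 []).map Prod.fst) none
      rw [id_nil]
      exact Rules.refl false 0 (B ::ₘ 0) B
  | Fml.box B, Γ, Δ, true :: false :: q, s, r, h =>
      id_correct B (Fml.box B ::ₘ 0) 0 q s r h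
  | Fml.box B, Γ, Δ, true :: true :: q, s, r, h => by simp [idNode] at h

/-- Depth bound for the identity proof. -/
def idDepth : Fml → ℕ
  | Fml.bot => 0
  | Fml.var _ => 0
  | Fml.imp B C => 2 + max (idDepth B) (idDepth C)
  | Fml.box B => 2 + idDepth B

theorem id_len : ∀ (A : Fml) (Γ Δ : Multiset Fml) (p : List Bool),
    (idNode A Γ Δ p).isSome → p.length ≤ idDepth A
  | Fml.bot, Γ, Δ, [], h => Nat.le_refl _
  | Fml.bot, Γ, Δ, b :: q, h => by cases b <;> simp [idNode] at h
  | Fml.var n, Γ, Δ, [], h => Nat.le_refl _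
  | Fml.var n, Γ, Δ, b :: q, h => by cases b <;> simp [idNode] at h
  | Fml.imp B C, Γ, Δ, [], h => by simp [idDepth]
  | Fml.imp B C, Γ, Δ, [false], h => by simp [idDepth]; omega
  | Fml.imp B C, Γ, Δ, false :: false :: q, h => by
      have := id_len C (B ::ₘ Γ) Δ q h
      simp [idDepth]; omega
  | Fml.imp B C, Γ, Δ, false :: true :: q, h => by
      have := id_len B Γ (C ::ₘ Δ) q h
      simp [idDepth]; omega
  | Fml.imp B C, Γ, Δ, true :: q, h => by simp [idNode] at h
  | Fml.box B, Γ, Δ, [], h => by simp [idDepth]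
  | Fml.box B, Γ, Δ, [false], h => by
      simp only [idDepth, List.length_cons, List.length_nil]; omega
  | Fml.box B, Γ, Δ, false :: false :: q, h => by
      have := id_len B (Fml.box B ::ₘ Γ) Δ q h
      simp [idDepth]; omega
  | Fml.box B, Γ, Δ, false :: true :: q, h => by simp [idNode] at h
  | Fml.box B, Γ, Δ, [true], h => by
      simp only [idDepth, List.length_cons, List.length_nil]; omega
  | Fml.box B, Γ, Δ, true :: false :: q, h => by
      have := id_len B (Fml.box B ::ₘ 0) 0 q h
      simp [idDepth]; omega
  | Fml.box B, Γ, Δ, true :: true :: q, h => by simp [idNode] at h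

theorem main_closed (A : Fml) : ∀ (p : List Bool) (i : Bool),
    mainNode A p = none → mainNode A (p ++ [i]) = none
  | [], i, h => by simp [mainNode] at h
  | [false], i, h => by simp [mainNode] at h
  | false :: false :: q, i, h => id_closed A (FF A ::ₘ 0) 0 q i h
  | [false, true], i, h => by simp [mainNode] at h
  | [false, true, false], i, h => by simp [mainNode] at h
  | [false, true, false, false], i, h => by simp [mainNode] at h
  | false :: true :: false :: false :: false :: q, i, h =>
      id_closed A (FF A ::ₘ 0) (A ::ₘ 0) q i h
  | false :: true :: false :: false :: true :: q, i, h => main_closed A q i h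
  | [false, true, true], i, h => by simp [mainNode] at h
  | [false, true, true, false], i, h => by simp [mainNode] at h
  | false :: true :: true :: false :: false :: q, i, h =>
      id_closed A (FF A ::ₘ 0) 0 q i h
  | false :: true :: true :: false :: true :: q, i, h => main_closed A q i h
  | true :: q, i, h => rfl
  | false :: true :: false :: true :: q, i, h => rfl
  | false :: true :: true :: true :: q, i, h => rfl

theorem main_correct (A : Fml) : ∀ (p : List Bool) (s : Sequent) (r : RuleTag),
    mainNode A p = some (s, r) →
    Rules false s r ((mainNode A (p ++ [false])).map Prod.fst)
      ((mainNode A (p ++ [true])).map Prod.fst)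
  | [], s, r, h => by
      simp only [mainNode, Option.some.injEq, Prod.mk.injEq] at h
      obtain ⟨rfl, rfl⟩ := h
      exact Rules.refl false 0 (A ::ₘ 0) (BB A)
  | [false], s, r, h => by
      simp only [mainNode, Option.some.injEq, Prod.mk.injEq] at h
      obtain ⟨rfl, rfl⟩ := h
      show Rules false _ _ ((idNode A (FF A ::ₘ 0) 0 []).map Prod.fst)
        (some (FF A ::ₘ 0, GG A ::ₘ A ::ₘ 0))
      rw [id_nil]
      exact Rules.impL false (FF A ::ₘ 0) (A ::ₘ 0) (GG A) A
  | false :: false :: q, s, r, h => id_correct A (FF A ::ₘ 0) 0 q s r h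
  | [false, true], s, r, h => by
      simp only [mainNode, Option.some.injEq, Prod.mk.injEq] at h
      obtain ⟨rfl, rfl⟩ := h
      show Rules false _ _ (some (FF A ::ₘ 0, GI A ::ₘ A ::ₘ 0))
        (some (FF A ::ₘ 0, GI A ::ₘ 0))
      have := Rules.box false 0 (BB A ::ₘ 0) (A ::ₘ 0) (GI A)
      simpa [FF, GG] using this
  | [false, true, false], s, r, h => by
      simp only [mainNode, Option.some.injEq, Prod.mk.injEq] at h
      obtain ⟨rfl, rfl⟩ := h
      show Rules false _ _ (some (A ::ₘ FF A ::ₘ 0, Fml.box A ::ₘ A ::ₘ 0)) none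
      exact Rules.impR false (FF A ::ₘ 0) (A ::ₘ 0) A (Fml.box A)
  | [false, true, false, false], s, r, h => by
      simp only [mainNode, Option.some.injEq, Prod.mk.injEq] at h
      obtain ⟨rfl, rfl⟩ := h
      show Rules false _ _ ((idNode A (FF A ::ₘ 0) (A ::ₘ 0) []).map Prod.fst)
        (some (FF A ::ₘ 0, A ::ₘ 0))
      rw [id_nil]
      have := Rules.box false (A ::ₘ 0) (BB A ::ₘ 0) (A ::ₘ 0) A
      simpa [FF, Multiset.cons_add] using this
  | false :: true :: false :: false :: false :: q, s, r, h =>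
      id_correct A (FF A ::ₘ 0) (A ::ₘ 0) q s r h
  | false :: true :: false :: false :: true :: q, s, r, h => main_correct A q s r h
  | [false, true, true], s, r, h => by
      simp only [mainNode, Option.some.injEq, Prod.mk.injEq] at h
      obtain ⟨rfl, rfl⟩ := h
      show Rules false _ _ (some (A ::ₘ FF A ::ₘ 0, Fml.box A ::ₘ 0)) none
      exact Rules.impR false (FF A ::ₘ 0) 0 A (Fml.box A)
  | [false, true, true, false], s, r, h => by
      simp only [mainNode, Option.some.injEq, Prod.mk.injEq] at h
      obtain ⟨rfl, rfl⟩ := h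
      show Rules false _ _ ((idNode A (FF A ::ₘ 0) 0 []).map Prod.fst)
        (some (FF A ::ₘ 0, A ::ₘ 0))
      rw [id_nil]
      have := Rules.box false (A ::ₘ 0) (BB A ::ₘ 0) 0 A
      simpa [FF, Multiset.cons_add] using this
  | false :: true :: true :: false :: false :: q, s, r, h =>
      id_correct A (FF A ::ₘ 0) 0 q s r h
  | false :: true :: true :: false :: true :: q, s, r, h => main_correct A q s r h
  | true :: q, s, r, h => by simp [mainNode] at h
  | false :: true :: false :: true :: q, s, r, h => by simp [mainNode] at h
  | false :: true :: true :: true :: q, s, r, h => by simp [mainNode] at h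

theorem main_long (A : Fml) : ∀ (p : List Bool),
    (mainNode A p).isSome → 6 + idDepth A ≤ p.length →
    p.take 5 = [false, true, false, false, true] ∨
      p.take 5 = [false, true, true, false, true]
  | [], h, hl => by simp only [List.length_nil] at hl; omega
  | [false], h, hl => by simp only [List.length_cons, List.length_nil] at hl; omega
  | false :: false :: q, h, hl => by
      have := id_len A (FF A ::ₘ 0) 0 q h
      simp only [List.length_cons] at hl; omega
  | [false, true], h, hl => by simp only [List.length_cons, List.length_nil] at hl; omega
  | [false, true, false], h, hl => by simp only [List.length_cons, List.length_nil] at hl; omega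
  | [false, true, false, false], h, hl => by simp only [List.length_cons, List.length_nil] at hl; omega
  | false :: true :: false :: false :: false :: q, h, hl => by
      have := id_len A (FF A ::ₘ 0) (A ::ₘ 0) q h
      simp only [List.length_cons] at hl; omega
  | false :: true :: false :: false :: true :: q, h, hl => Or.inl rfl
  | [false, true, true], h, hl => by simp only [List.length_cons, List.length_nil] at hl; omega
  | [false, true, true, false], h, hl => by simp only [List.length_cons, List.length_nil] at hl; omega
  | false :: true :: true :: false :: false :: q, h, hl => by
      have := id_len A (FF A ::ₘ 0) 0 q h
      simp only [List.length_cons] at hl; omega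
  | false :: true :: true :: false :: true :: q, h, hl => Or.inr rfl
  | true :: q, h, hl => by simp [mainNode] at h
  | false :: true :: false :: true :: q, h, hl => by simp [mainNode] at h
  | false :: true :: true :: true :: q, h, hl => by simp [mainNode] at h

theorem guardAux (A : Fml) : ∀ (N : ℕ) (f : ℕ → Bool),
    (∀ n, (mainNode A ((List.range n).map f)).isSome) →
    ∃ n, N ≤ n ∧ f n = true ∧
      (mainNode A ((List.range n).map f)).map Prod.snd = some RuleTag.box := by
  intro N
  induction N using Nat.strong_induction_on with
  | _ N IH =>
    intro f hf
    have hlong := main_long A ((List.range (6 + idDepth A)).map f) (hf _) (by simp)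
    have htake : ((List.range (6 + idDepth A)).map f).take 5 = (List.range 5).map f := by
      rw [← List.map_take, List.take_range, min_eq_left (by omega)]
    rw [htake] at hlong
    have h5 : (List.range 5).map f = [f 0, f 1, f 2, f 3, f 4] := by
      rw [show List.range 5 = [0, 1, 2, 3, 4] from rfl]; rfl
    have h4 : (List.range 4).map f = [f 0, f 1, f 2, f 3] := by
      rw [show List.range 4 = [0, 1, 2, 3] from rfl]; rfl
    rw [h5] at hlong
    have hshift : ∀ n, (List.range (5 + n)).map f =
        ((List.range 5).map f) ++ (List.range n).map (fun k => f (5 + k)) := by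
      intro n
      rw [List.range_add, List.map_append, List.map_map]
      rfl
    rcases hlong with hL | hL
    · simp only [List.cons.injEq, and_true] at hL
      obtain ⟨h0, h1, h2, h3, h4'⟩ := hL
      by_cases hN : N ≤ 4
      · refine ⟨4, hN, h4', ?_⟩
        rw [h4, h0, h1, h2, h3]; rfl
      · have habs : ∀ n, mainNode A ((List.range (5 + n)).map f) =
            mainNode A ((List.range n).map (fun k => f (5 + k))) := by
          intro n
          rw [hshift n, h5, h0, h1, h2, h3, h4']
          rfl
        have hg : ∀ n, (mainNode A ((List.range n).map (fun k => f (5 + k)))).isSome := by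
          intro n; rw [← habs n]; exact hf _
        obtain ⟨n, hn1, hn2, hn3⟩ := IH (N - 5) (by omega) _ hg
        refine ⟨5 + n, by omega, by simpa using hn2, ?_⟩
        rw [habs n]; exact hn3
    · simp only [List.cons.injEq, and_true] at hL
      obtain ⟨h0, h1, h2, h3, h4'⟩ := hL
      by_cases hN : N ≤ 4
      · refine ⟨4, hN, h4', ?_⟩
        rw [h4, h0, h1, h2, h3]; rfl
      · have habs : ∀ n, mainNode A ((List.range (5 + n)).map f) =
            mainNode A ((List.range n).map (fun k => f (5 + k))) := by
          intro n
          rw [hshift n, h5, h0, h1, h2, h3, h4']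
          rfl
        have hg : ∀ n, (mainNode A ((List.range n).map (fun k => f (5 + k)))).isSome := by
          intro n; rw [← habs n]; exact hf _
        obtain ⟨n, hn1, hn2, hn3⟩ := IH (N - 5) (by omega) _ hg
        refine ⟨5 + n, by omega, by simpa using hn2, ?_⟩
        rw [habs n]; exact hn3

end GrzAux

/-- For every formula `A`, the sequent `□(□(A → □A) → A) ⇒ A` is provable
in `Grz_∞`. -/
theorem grzInf_grzAxiom (A : Fml) :
    ProvableInf false
      (({Fml.box (Fml.imp (Fml.box (Fml.imp A (Fml.box A))) A)} : Multiset Fml),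
        ({A} : Multiset Fml)) := by
  exact ⟨⟨GrzAux.mainNode A, rfl, GrzAux.main_closed A, GrzAux.main_correct A,
    fun f h N => GrzAux.guardAux A N f h⟩, rfl⟩
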